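/- Let C be a free semi-theory, C̄ its completion, and Φ_C : C → C̄ the completion functor. Then restriction along Φ_C induces an isomorphism of categories Φ_C^* : Alg^{C̄} → Alg^C between the category of strict C̄-algebras and the category of strict C-algebras. -/

import Mathlib

open CategoryTheory Limits Topology Topology.Homotopy

noncomputable section

namespace SemiThPaper

/-! ### Weak homotopy equivalences -/

/-- The map induced by a continuous map on homotopy "groups" (sets for `N = Fin 0`). -/
def HomotopyGroup.map {X Y : Type} [TopologicalSpace X] [TopologicalSpace Y]
    (f : C(X, Y)) (N : Type) (x : X) :
    HomotopyGroup N X x → HomotopyGroup N Y (f x) :=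
  Quotient.map
    (fun g => ⟨f.comp g.1, fun y hy => by
      simp only [ContinuousMap.comp_apply]
      rw [g.2 y hy]⟩)
    (fun g h H => H.elim fun H => ⟨H.compContinuousMap f⟩)

/-- The map induced on path components. -/
def ZerothHomotopy.map {X Y : Type} [TopologicalSpace X] [TopologicalSpace Y]
    (f : C(X, Y)) : ZerothHomotopy X → ZerothHomotopy Y :=
  Quotient.map f (fun _ _ h => h.elim fun γ => ⟨γ.map f.continuous⟩)

/-- A weak homotopy equivalence of topological spaces: a continuous map inducing a
bijection on path components and on all homotopy groups at all basepoints. -/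
def IsWeakHomotopyEquiv {X Y : TopCat} (f : X ⟶ Y) : Prop :=
  Function.Bijective (ZerothHomotopy.map (f.hom : C(X, Y))) ∧
    ∀ (n : ℕ) (x : X), Function.Bijective (HomotopyGroup.map (f.hom : C(X, Y)) (Fin n) x)

/-- A weak equivalence of simplicial sets: a map whose geometric realization is a
weak homotopy equivalence. -/
def WeakEquiv {A B : SSet} (f : A ⟶ B) : Prop :=
  IsWeakHomotopyEquiv (SSet.toTop.map f)


/-! ### Semi-theories -/

/-- The objects `[1], [2], [3], …` of a semi-theory, indexed by positive integers. -/
@[ext]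
structure Ob : Type where
  val : ℕ+

instance : Coe ℕ+ Ob := ⟨Ob.mk⟩

/-- An (unpointed) semi-theory: a category with objects `[1], [2], …`
together with distinguished projection morphisms `p^n_k : [n] ⟶ [1]`, where `p^1_1 = 𝟙 [1]`. -/
structure SemiTheory : Type 1 where
  cat : Category.{0, 0} Ob
  proj : ∀ n : ℕ+, Fin n → @Quiver.Hom Ob cat.toCategoryStruct.toQuiver ⟨n⟩ ⟨1⟩
  proj_one : proj 1 ⟨0, Nat.one_pos⟩ = cat.toCategoryStruct.id ⟨1⟩

/-- The category of diagrams of simplicial sets over (the underlying category of)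
a semi-theory. -/
abbrev SemiTheory.Diag (S : SemiTheory) : Type 1 :=
  @CategoryTheory.Functor Ob S.cat SSet _

/-- The `n`-fold levelwise power of a simplicial set. -/
@[simps]
def finPow (n : ℕ+) (A : SSet) : SSet where
  obj m := Fin n → A.obj m
  map θ := TypeCat.ofHom fun a k => A.map θ (a k)

/-- The canonical comparison map `X[n] ⟶ X[1]^n` of a diagram over a semi-theory,
whose components are induced by the projections. -/
def SemiTheory.projFan (S : SemiTheory) (X : S.Diag) (n : ℕ+) :
    (letI := S.cat; (X.obj ⟨n⟩ ⟶ finPow n (X.obj ⟨1⟩))) :=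
  letI := S.cat
  { app := fun m => TypeCat.ofHom fun a k => (X.map (S.proj n k)).app m a
    naturality := fun m m' θ => by
      apply ConcreteCategory.hom_ext; intro a
      funext k
      exact ConcreteCategory.congr_hom ((X.map (S.proj n k)).naturality θ) a }

/-- A strict algebra over a semi-theory: the comparison maps `X[n] ⟶ X[1]^n` are
isomorphisms for all `n > 1`. -/
def SemiTheory.IsStrictAlgebra (S : SemiTheory) (X : S.Diag) : Prop :=
  ∀ n : ℕ+, 1 < (n : ℕ) → IsIso (S.projFan X n)

/-- A homotopy algebra over a semi-theory: the comparison maps `X[n] ⟶ X[1]^n` are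
weak equivalences of simplicial sets for all `n > 1`. -/
def SemiTheory.IsHomotopyAlgebra (S : SemiTheory) (X : S.Diag) : Prop :=
  ∀ n : ℕ+, 1 < (n : ℕ) → WeakEquiv (S.projFan X n)

/-- A semi-theory is an algebraic theory if composition with the projections induces
bijections `Hom([m],[n]) ≅ Hom([m],[1])^n` for all `m` and all `n > 1`. -/
def SemiTheory.IsAlgebraic (S : SemiTheory) : Prop :=
  letI := S.cat
  ∀ (m n : ℕ+), 1 < (n : ℕ) →
    Function.Bijective (fun (f : (⟨m⟩ : Ob) ⟶ ⟨n⟩) (k : Fin n) => f ≫ S.proj n k)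

/-- The comparison map `X[n] ⟶ X[1]^n` for a diagram of simplicial sets over any
category equipped with objects `[n]` and projection morphisms. -/
def projFanAt {C : Type} [Category.{0} C] (o : ℕ+ → C) (p : ∀ n : ℕ+, Fin n → (o n ⟶ o 1))
    (X : C ⥤ SSet) (n : ℕ+) : X.obj (o n) ⟶ finPow n (X.obj (o 1)) where
  app m := TypeCat.ofHom fun a k => (X.map (p n k)).app m a
  naturality m m' θ := by
    apply ConcreteCategory.hom_ext; intro a
    funext k
    exact ConcreteCategory.congr_hom ((X.map (p n k)).naturality θ) a

/-- Strictness of a diagram with respect to given objects and projections. -/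
def IsStrictAt {C : Type} [Category.{0} C] (o : ℕ+ → C)
    (p : ∀ n : ℕ+, Fin n → (o n ⟶ o 1)) (X : C ⥤ SSet) : Prop :=
  ∀ n : ℕ+, 1 < (n : ℕ) → IsIso (projFanAt o p X n)

/-- The homotopy-algebra condition for a diagram with respect to given objects
and projections. -/
def IsHomotopyAt {C : Type} [Category.{0} C] (o : ℕ+ → C)
    (p : ∀ n : ℕ+, Fin n → (o n ⟶ o 1)) (X : C ⥤ SSet) : Prop :=
  ∀ n : ℕ+, 1 < (n : ℕ) → WeakEquiv (projFanAt o p X n)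

/-! ### Free semi-theories -/

/-- Generating data for a free semi-theory: a family of free generators that are
not projections (the projections are added separately as free generators). -/
structure GenData : Type 1 where
  gen : ℕ+ → ℕ+ → Type

/-- The generating quiver of the free semi-theory on `G`: the generators of `G`
together with projection arrows `p^n_k : [n] → [1]` for `n > 1`
(the projection `p^1_1` is the identity, i.e. the empty path). -/
inductive Arr (G : GenData) : ℕ+ → ℕ+ → Type
  | gen {a b : ℕ+} : G.gen a b → Arr G a b
  | proj {n : ℕ+} (h : 1 < (n : ℕ)) (k : Fin n) : Arr G n 1

/-- The object type of the free semi-theory on `G` (a copy of `Ob`). -/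
def FreeOb (G : GenData) : Type := Ob

instance freeQuiver (G : GenData) : Quiver (FreeOb G) :=
  ⟨fun a b => Arr G (Ob.val a) (Ob.val b)⟩

/-- The free semi-theory on `G`, as a category: the paths category on the
generating quiver. -/
abbrev FreeST (G : GenData) := CategoryTheory.Paths (FreeOb G)

/-- The object `[n]` of the free semi-theory. -/
def FreeST.of (G : GenData) (n : ℕ+) : FreeST G := (⟨n⟩ : Ob)

/-- The generating projection arrow, as an arrow of the generating quiver. -/
def projArr (G : GenData) {n : ℕ+} (h : 1 < (n : ℕ)) (k : Fin n) :
    @Quiver.Hom (FreeOb G) _ (FreeST.of G n) (FreeST.of G 1) := Arr.proj h k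

/-- The projection `p^n_k` in the free semi-theory. -/
def projPath (G : GenData) (n : ℕ+) (k : Fin n) : FreeST.of G n ⟶ FreeST.of G 1 :=
  if h : 1 < (n : ℕ) then (projArr G h k).toPath
  else eqToHom (congrArg (FreeST.of G)
    (PNat.coe_injective (by
      rw [PNat.one_coe]
      exact le_antisymm (not_lt.1 h) n.pos)))

/-- The free semi-theory on `G`, as a semi-theory. -/
def freeSemiTheory (G : GenData) : SemiTheory where
  cat := inferInstanceAs (Category (FreeST G))
  proj n k := projPath G n k
  proj_one := by
    show projPath G 1 ⟨0, Nat.one_pos⟩ = _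
    rw [projPath, dif_neg (by norm_num)]
    rfl

/-- The initial semi-theory `P` has no generators besides the projections. -/
def emptyGen : GenData := ⟨fun _ _ => PEmpty⟩

/-- The underlying category of the initial semi-theory `P`. -/
abbrev PCat := FreeST emptyGen

/-- The initial semi-theory `P`: its only non-identity morphisms are the projections. -/
def PTheory : SemiTheory := freeSemiTheory emptyGen

/-- The action of the unique morphism of semi-theories `P ⟶ C` on generating arrows. -/
def jArr (G : GenData) : ∀ {a b : ℕ+}, Arr emptyGen a b →
    @Quiver.Path (FreeOb G) _ ((⟨a⟩ : Ob) : FreeST G) ((⟨b⟩ : Ob) : FreeST G)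
  | _, _, .gen α => α.elim
  | _, _, .proj h k => (projArr G h k).toPath

/-- The unique morphism of semi-theories `P ⟶ C` into a free semi-theory. -/
def Jfree (G : GenData) : PCat ⥤ FreeST G :=
  Paths.lift
    { obj := fun n => (n : FreeST G)
      map := fun {a b} e => jArr G e }

/-! ### The completion of a free semi-theory -/

/-- Trees representing the morphisms `[n] ⟶ [1]` of the completion `C̄` of a free
semi-theory: either a single edge labelled by a projection `p^n_k`, or a tree whose
lowest edge is labelled by a component `α_i` of a non-projection generator
`α : [m] ⟶ [r]` and which is obtained by grafting `m` smaller trees. -/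
inductive CTree (G : GenData) (n : ℕ+) : Type
  | proj (k : Fin n) : CTree G n
  | node {m r : ℕ+} (α : G.gen m r) (i : Fin r) (ts : Fin m → CTree G n) : CTree G n

/-- Morphisms `[n] ⟶ [m]` in the completion: `m`-tuples of trees. -/
def CompHom (G : GenData) (n m : ℕ+) : Type := Fin m → CTree G n

/-- Grafting: substituting the trees `T k` for the initial edges labelled `p^m_k`. -/
def CTree.graft {G : GenData} {n m : ℕ+} : CTree G m → CompHom G n m → CTree G n
  | .proj k, T => T k
  | .node α i ts, T => .node α i (fun j => (ts j).graft T)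

/-- The identity of the completion. -/
def compId (G : GenData) (n : ℕ+) : CompHom G n n := fun k => .proj k

/-- Composition in the completion, by grafting. -/
def compComp {G : GenData} {a b c : ℕ+} (T : CompHom G a b) (S : CompHom G b c) :
    CompHom G a c :=
  fun j => (S j).graft T

theorem CTree.graft_id {G : GenData} {m : ℕ+} (t : CTree G m) :
    t.graft (compId G m) = t := by
  induction t with
  | proj k => rfl
  | node α i ts ih =>
      simp only [CTree.graft]
      congr 1
      funext j
      exact ih j

theorem CTree.graft_graft {G : GenData} {a b c : ℕ+} (s : CTree G c)
    (U : CompHom G b c) (T : CompHom G a b) :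
    (s.graft U).graft T = s.graft (compComp T U) := by
  induction s with
  | proj k => rfl
  | node α i ts ih =>
      simp only [CTree.graft]
      congr 1
      funext j
      exact ih j

/-- The object type of the completion (a copy of `Ob`). -/
def CompOb (G : GenData) : Type := Ob

/-- The completion `C̄` of a free semi-theory, as a category. -/
instance compCategory (G : GenData) : Category (CompOb G) where
  Hom n m := CompHom G (Ob.val n) (Ob.val m)
  id n := compId G _
  comp f g := compComp f g
  id_comp f := funext fun j => CTree.graft_id _
  comp_id f := rfl
  assoc f g h := funext fun j => (CTree.graft_graft _ _ _).symm

/-- The object `[n]` of the completion. -/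
def CompOb.of (G : GenData) (n : ℕ+) : CompOb G := (⟨n⟩ : Ob)

/-- The projection `p̂^n_k` of the completion: a single edge labelled `p^n_k`. -/
def compProj (G : GenData) (n : ℕ+) (k : Fin n) : CompOb.of G n ⟶ CompOb.of G 1 :=
  fun _ => .proj k

/-- The completion, as a semi-theory. -/
def compSemiTheory (G : GenData) : SemiTheory where
  cat := inferInstanceAs (Category (CompOb G))
  proj n k := compProj G n k
  proj_one := by
    funext i
    have h0 : i = ⟨0, Nat.one_pos⟩ := Fin.ext (Nat.lt_one_iff.mp i.isLt)
    rw [h0]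
    rfl

/-- The completion functor `Φ` on generating arrows. -/
def phiArr (G : GenData) : ∀ {a b : ℕ+}, Arr G a b → CompHom G a b
  | _, _, .gen α => fun i => .node α i (fun k => .proj k)
  | _, _, .proj _ k => fun _ => .proj k

/-- The completion functor `Φ_C : C ⟶ C̄` of a free semi-theory. -/
def phi (G : GenData) : FreeST G ⥤ CompOb G :=
  Paths.lift
    { obj := fun n => (n : CompOb G)
      map := fun {a b} e => phiArr G e }

/-! ### Discrete simplicial sets, products, mapping complexes -/

/-- The discrete simplicial set on a type. -/
@[simps]
def disc (A : Type) : SSet where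
  obj _ := A
  map _ := TypeCat.ofHom id

/-- The map of discrete simplicial sets induced by a function. -/
@[simps]
def disc.map {A B : Type} (f : A → B) : disc A ⟶ disc B where
  app _ := TypeCat.ofHom f

/-- The diagram of (discrete) simplicial sets corepresented by the object `[n]`
of a semi-theory. -/
def SemiTheory.corep (S : SemiTheory) (n : ℕ+) : S.Diag :=
  letI := S.cat
  { obj := fun m => disc ((⟨n⟩ : Ob) ⟶ m)
    map := fun f => disc.map (fun g => g ≫ f)
    map_id := fun m => by
      apply NatTrans.ext
      funext x; apply ConcreteCategory.hom_ext; intro g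
      show g ≫ 𝟙 m = g
      exact Category.comp_id _
    map_comp := fun f f' => by
      apply NatTrans.ext
      funext x; apply ConcreteCategory.hom_ext; intro g
      show g ≫ (_ ≫ _) = _
      exact (Category.assoc _ _ _).symm }

/-- Levelwise product of two simplicial sets. -/
@[simps]
def mulC (A K : SSet) : SSet where
  obj m := A.obj m × K.obj m
  map θ := TypeCat.ofHom fun p => (A.map θ p.1, K.map θ p.2)
  map_id m := by apply ConcreteCategory.hom_ext; intro p; simp
  map_comp f g := by apply ConcreteCategory.hom_ext; intro p; simp

/-- `f × id` on levelwise products. -/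
@[simps]
def mulC.mapLeft {A B : SSet} (f : A ⟶ B) (K : SSet) : mulC A K ⟶ mulC B K where
  app m := TypeCat.ofHom fun p => (f.app m p.1, p.2)
  naturality m m' θ := by
    apply ConcreteCategory.hom_ext; intro p
    simp only [mulC_obj, mulC_map, types_comp_apply]
    show (f.app m' (A.map θ p.1), K.map θ p.2) = (B.map θ (f.app m p.1), K.map θ p.2)
    exact Prod.ext (NatTrans.naturality_apply f θ p.1) rfl

/-- `id × g` on levelwise products. -/
@[simps]
def mulC.mapRight (A : SSet) {K L : SSet} (g : K ⟶ L) : mulC A K ⟶ mulC A L where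
  app m := TypeCat.ofHom fun p => (p.1, g.app m p.2)
  naturality m m' θ := by
    apply ConcreteCategory.hom_ext; intro p
    simp only [mulC_obj, mulC_map, types_comp_apply]
    show (A.map θ p.1, g.app m' (K.map θ p.2)) = (A.map θ p.1, L.map θ (g.app m p.2))
    exact Prod.ext rfl (NatTrans.naturality_apply g θ p.2)

theorem mulC.mapRight_id (A K : SSet) : mulC.mapRight A (𝟙 K) = 𝟙 (mulC A K) := by
  apply NatTrans.ext; funext x; apply ConcreteCategory.hom_ext; intro p; rfl

theorem mulC.mapRight_comp (A : SSet) {K L M : SSet} (g : K ⟶ L) (h : L ⟶ M) :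
    mulC.mapRight A (g ≫ h) = mulC.mapRight A g ≫ mulC.mapRight A h := by
  apply NatTrans.ext; funext x; apply ConcreteCategory.hom_ext; intro p; rfl

/-- Naturality, in applied form. -/
theorem natApply {C : Type} [Category C] {X Y : C ⥤ SSet} (f : X ⟶ Y)
    {c c' : C} (φ : c ⟶ c') (x : SimplexCategoryᵒᵖ) (a : (X.obj c).obj x) :
    (f.app c').app x ((X.map φ).app x a) = (Y.map φ).app x ((f.app c).app x a) :=
  ConcreteCategory.congr_hom (NatTrans.congr_app (f.naturality φ) x) a

/-- The objectwise product of a diagram of simplicial sets with a constant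
simplicial set. -/
@[simps]
def prodConst {C : Type} [Category C] (X : C ⥤ SSet) (K : SSet) : C ⥤ SSet where
  obj c := mulC (X.obj c) K
  map f := mulC.mapLeft (X.map f) K
  map_id c := by
    apply NatTrans.ext; funext x; apply ConcreteCategory.hom_ext; intro p
    show ((X.map (𝟙 c)).app x p.1, p.2) = p
    rw [X.map_id]
    rfl
  map_comp f g := by
    apply NatTrans.ext; funext x; apply ConcreteCategory.hom_ext; intro p
    show ((X.map (f ≫ g)).app x p.1, p.2) = _
    rw [X.map_comp]
    rfl

/-- Functoriality of `prodConst` in the diagram variable. -/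
@[simps]
def prodConst.mapX {C : Type} [Category C] {X X' : C ⥤ SSet} (f : X ⟶ X') (K : SSet) :
    prodConst X K ⟶ prodConst X' K where
  app c := mulC.mapLeft (f.app c) K
  naturality c c' φ := by
    apply NatTrans.ext; funext x; apply ConcreteCategory.hom_ext; intro p
    simp only [prodConst_obj, prodConst_map, NatTrans.comp_app, mulC.mapLeft_app,
      types_comp_apply]
    exact Prod.ext (natApply f φ x p.1) rfl

/-- Functoriality of `prodConst` in the constant variable. -/
@[simps]
def prodConst.mapK {C : Type} [Category C] (X : C ⥤ SSet) {K L : SSet} (g : K ⟶ L) :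
    prodConst X K ⟶ prodConst X L where
  app c := mulC.mapRight (X.obj c) g
  naturality c c' φ := by
    apply NatTrans.ext; funext x; apply ConcreteCategory.hom_ext; intro p
    rfl

theorem prodConst.mapK_id {C : Type} [Category C] (X : C ⥤ SSet) (K : SSet) :
    prodConst.mapK X (𝟙 K) = 𝟙 (prodConst X K) := by
  apply NatTrans.ext; funext c
  exact mulC.mapRight_id _ _

theorem prodConst.mapK_comp {C : Type} [Category C] (X : C ⥤ SSet) {K L M : SSet}
    (g : K ⟶ L) (h : L ⟶ M) :
    prodConst.mapK X (g ≫ h) = prodConst.mapK X g ≫ prodConst.mapK X h := by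
  apply NatTrans.ext; funext c
  exact mulC.mapRight_comp _ _ _

/-- The standard simplex `Δ[k]`, for `k : SimplexCategoryᵒᵖ`. -/
def stdS (k : SimplexCategoryᵒᵖ) : SSet := SSet.stdSimplex.obj k.unop

/-- Functoriality of the standard simplex (contravariantly in `SimplexCategoryᵒᵖ`). -/
def stdMap {k l : SimplexCategoryᵒᵖ} (θ : k ⟶ l) : stdS l ⟶ stdS k :=
  SSet.stdSimplex.map θ.unop

theorem stdMap_id (k : SimplexCategoryᵒᵖ) : stdMap (𝟙 k) = 𝟙 (stdS k) :=
  SSet.stdSimplex.map_id _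

theorem stdMap_comp {k l m : SimplexCategoryᵒᵖ} (θ : k ⟶ l) (η : l ⟶ m) :
    stdMap (θ ≫ η) = stdMap η ≫ stdMap θ :=
  SSet.stdSimplex.map_comp _ _

/-- The simplicial mapping complex of two diagrams of simplicial sets: its
`m`-simplices are the natural transformations `X × Δ[m] ⟶ Y`. -/
def MapCx {C : Type} [Category C] (X Y : C ⥤ SSet) : SSet where
  obj m := prodConst X (stdS m) ⟶ Y
  map {m m'} θ := TypeCat.ofHom fun t => prodConst.mapK X (stdMap θ) ≫ t
  map_id m := by
    apply ConcreteCategory.hom_ext; intro t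
    simp [stdMap_id, prodConst.mapK_id]
  map_comp θ η := by
    apply ConcreteCategory.hom_ext; intro t
    simp [stdMap_comp, prodConst.mapK_comp]

/-- Precomposition on mapping complexes. -/
def MapCx.pre {C : Type} [Category C] {X X' : C ⥤ SSet} (f : X' ⟶ X) (Y : C ⥤ SSet) :
    MapCx X Y ⟶ MapCx X' Y where
  app m := TypeCat.ofHom fun t => prodConst.mapX f (stdS m) ≫ t
  naturality m m' θ := by
    apply ConcreteCategory.hom_ext; intro t
    rfl

/-- Postcomposition on mapping complexes. -/
def MapCx.post {C : Type} [Category C] (X : C ⥤ SSet) {Y Y' : C ⥤ SSet} (g : Y ⟶ Y') :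
    MapCx X Y ⟶ MapCx X Y' where
  app m := TypeCat.ofHom fun t => t ≫ g
  naturality m m' θ := by
    apply ConcreteCategory.hom_ext; intro t
    rfl

/-- Restriction of mapping complexes along a functor. -/
def MapCx.whisk {C D : Type} [Category C] [Category D] (F : D ⥤ C) (X Y : C ⥤ SSet) :
    MapCx X Y ⟶ MapCx (F ⋙ X) (F ⋙ Y) where
  app m := TypeCat.ofHom fun t =>
    (show prodConst (F ⋙ X) (stdS m) ⟶ F ⋙ Y from CategoryTheory.Functor.whiskerLeft F t)
  naturality m m' θ := by
    apply ConcreteCategory.hom_ext; intro t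
    rfl

/-- The simplicial mapping complex of two simplicial sets: its `m`-simplices are
the maps `A × Δ[m] ⟶ B`. -/
def sMap (A B : SSet) : SSet where
  obj m := mulC A (stdS m) ⟶ B
  map {m m'} θ := TypeCat.ofHom fun t => mulC.mapRight A (stdMap θ) ≫ t
  map_id m := by
    apply ConcreteCategory.hom_ext; intro t
    simp [stdMap_id, mulC.mapRight_id]
  map_comp θ η := by
    apply ConcreteCategory.hom_ext; intro t
    simp [stdMap_comp, mulC.mapRight_comp]

/-- Precomposition on simplicial mapping complexes. -/
def sMap.pre {A A' : SSet} (f : A' ⟶ A) (B : SSet) : sMap A B ⟶ sMap A' B where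
  app m := TypeCat.ofHom fun t => mulC.mapLeft f (stdS m) ≫ t
  naturality m m' θ := by
    apply ConcreteCategory.hom_ext; intro t
    rfl

/-- Postcomposition on simplicial mapping complexes. -/
def sMap.post (A : SSet) {B B' : SSet} (g : B ⟶ B') : sMap A B ⟶ sMap A B' where
  app m := TypeCat.ofHom fun t => t ≫ g
  naturality m m' θ := by
    apply ConcreteCategory.hom_ext; intro t
    rfl


/-- The category of strict algebras over the completion `C̄`. -/
abbrev AlgComp (G : GenData) :=
  ObjectProperty.FullSubcategory (fun A : CompOb G ⥤ SSet => IsStrictAt (CompOb.of G) (compProj G) A)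

/-- The category of strict algebras over the free semi-theory `C`. -/
abbrev AlgFree (G : GenData) :=
  ObjectProperty.FullSubcategory (fun A : FreeST G ⥤ SSet => IsStrictAt (FreeST.of G) (projPath G) A)

/-! ### Auxiliary development for the proof -/

section Aux

variable {G : GenData}

/-- Projection out of a levelwise power. -/
def pick {n : ℕ+} (B : SSet) (k : Fin n) : finPow n B ⟶ B where
  app x := TypeCat.ofHom fun f => f k
  naturality x y θ := rfl

/-- Tupling of maps into a levelwise power. -/
def tup {X B : SSet} {n : ℕ+} (fs : Fin n → (X ⟶ B)) : X ⟶ finPow n B where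
  app x := TypeCat.ofHom fun a k => (fs k).app x a
  naturality x y θ := by
    apply ConcreteCategory.hom_ext; intro a
    funext k
    exact ConcreteCategory.congr_hom ((fs k).naturality θ) a

theorem tup_pick {X B : SSet} {n : ℕ+} (fs : Fin n → (X ⟶ B)) (k : Fin n) :
    tup fs ≫ pick B k = fs k := rfl

theorem comp_tup {W X B : SSet} {n : ℕ+} (g : W ⟶ X) (fs : Fin n → (X ⟶ B)) :
    g ≫ tup fs = tup (fun k => g ≫ fs k) := rfl

theorem tup_ext {X B : SSet} {n : ℕ+} {f g : X ⟶ finPow n B}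
    (h : ∀ k, f ≫ pick B k = g ≫ pick B k) : f = g := by
  apply NatTrans.ext
  funext x; apply ConcreteCategory.hom_ext; intro a
  funext k
  exact ConcreteCategory.congr_hom (NatTrans.congr_app (h k) x) a

/-- Power of a map of simplicial sets. -/
def powMap {n : ℕ+} {B B' : SSet} (g : B ⟶ B') : finPow n B ⟶ finPow n B' where
  app x := TypeCat.ofHom fun f k => g.app x (f k)
  naturality x y θ := by
    apply ConcreteCategory.hom_ext; intro f
    funext k
    exact ConcreteCategory.congr_hom (g.naturality θ) (f k)

theorem tup_powMap {X B B' : SSet} {n : ℕ+} (fs : Fin n → (X ⟶ B)) (g : B ⟶ B') :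
    tup fs ≫ powMap g = tup (fun k => fs k ≫ g) := rfl

theorem projFanAt_eq_tup {C : Type} [Category.{0} C] (o : ℕ+ → C)
    (p : ∀ n : ℕ+, Fin n → (o n ⟶ o 1)) (X : C ⥤ SSet) (n : ℕ+) :
    projFanAt o p X n = tup (fun k => X.map (p n k)) := rfl

theorem isIso_tup_id (B : SSet) : IsIso (tup (n := 1) (fun _ => 𝟙 B)) := by
  refine ⟨⟨pick B ⟨0, Nat.one_pos⟩, rfl, ?_⟩⟩
  apply NatTrans.ext
  funext x; apply ConcreteCategory.hom_ext; intro f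
  funext k
  have h0 : (k : ℕ) = 0 := Nat.lt_one_iff.mp (by simpa using k.isLt)
  have : k = ⟨0, Nat.one_pos⟩ := Fin.ext h0
  rw [this]
  rfl

theorem isIso_projFanAt_one {C : Type} [Category.{0} C] (o : ℕ+ → C)
    (p : ∀ n : ℕ+, Fin n → (o n ⟶ o 1)) (X : C ⥤ SSet)
    (h1 : ∀ k, p 1 k = 𝟙 (o 1)) : IsIso (projFanAt o p X 1) := by
  have : projFanAt o p X 1 = tup (fun _ => 𝟙 (X.obj (o 1))) := by
    rw [projFanAt_eq_tup]
    exact congrArg tup (funext fun k => by rw [h1 k, X.map_id])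
  rw [this]
  exact isIso_tup_id _

theorem strictAll {C : Type} [Category.{0} C] (o : ℕ+ → C)
    (p : ∀ n : ℕ+, Fin n → (o n ⟶ o 1)) (X : C ⥤ SSet)
    (h1 : ∀ k, p 1 k = 𝟙 (o 1)) (hX : IsStrictAt o p X) :
    ∀ n, IsIso (projFanAt o p X n) := by
  intro n
  by_cases h : 1 < (n : ℕ)
  · exact hX n h
  · have hn : n = 1 := PNat.coe_injective (by rw [PNat.one_coe]; exact le_antisymm (not_lt.mp h) n.pos)
    subst hn
    exact isIso_projFanAt_one o p X h1

theorem projPath_one (k : Fin ((1 : ℕ+) : ℕ)) : projPath G 1 k = 𝟙 (FreeST.of G 1) := by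
  simp only [projPath]
  rw [dif_neg (by simp)]
  simp

theorem compProj_one (k : Fin ((1 : ℕ+) : ℕ)) : compProj G 1 k = 𝟙 (CompOb.of G 1) := by
  funext j
  show CTree.proj k = CTree.proj j
  have h0 : (k : ℕ) = 0 := Nat.lt_one_iff.mp (by simpa using k.isLt)
  have h0' : (j : ℕ) = 0 := Nat.lt_one_iff.mp j.isLt
  have : k = j := Fin.ext (h0.trans h0'.symm)
  cases this; rfl

end Aux

section Ext

variable {G : GenData}

/-- The projection fan of a diagram over the free semi-theory. -/
abbrev fanF (A : FreeST G ⥤ SSet) (n : ℕ+) :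
    A.obj (FreeST.of G n) ⟶ finPow n (A.obj (FreeST.of G 1)) :=
  projFanAt (FreeST.of G) (projPath G) A n

/-- The projection fan of a diagram over the completion. -/
abbrev fanC (A : CompOb G ⥤ SSet) (n : ℕ+) :
    A.obj (CompOb.of G n) ⟶ finPow n (A.obj (CompOb.of G 1)) :=
  projFanAt (CompOb.of G) (compProj G) A n

variable (A B : FreeST G ⥤ SSet)
variable (hA : ∀ n, IsIso (fanF A n)) (hB : ∀ n, IsIso (fanF B n))

/-- The inverse of the projection fan of a strict algebra. -/
noncomputable def fanInv (n : ℕ+) :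
    finPow n (A.obj (FreeST.of G 1)) ⟶ A.obj (FreeST.of G n) :=
  haveI := hA n
  inv (fanF A n)

theorem fan_fanInv (n : ℕ+) : fanF A n ≫ fanInv A hA n = 𝟙 _ := by
  haveI := hA n
  exact IsIso.hom_inv_id _

theorem fanInv_fan (n : ℕ+) : fanInv A hA n ≫ fanF A n = 𝟙 _ := by
  haveI := hA n
  exact IsIso.inv_hom_id _

/-- A generator of the free semi-theory, as an arrow of the generating quiver. -/
def genArrow {m r : ℕ+} (α : G.gen m r) :
    @Quiver.Hom (FreeOb G) _ (FreeST.of G m) (FreeST.of G r) := Arr.gen α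

/-- An arbitrary generating arrow, as an arrow of the generating quiver. -/
def arrHom {a b : ℕ+} (e : Arr G a b) :
    @Quiver.Hom (FreeOb G) _ (FreeST.of G a) (FreeST.of G b) := e

/-- The component `α_i` of a generator, as a morphism `[m] ⟶ [1]` of `C`. -/
def genHom {m r : ℕ+} (α : G.gen m r) (i : Fin r) : FreeST.of G m ⟶ FreeST.of G 1 :=
  (Quiver.Hom.toPath (genArrow α) : FreeST.of G m ⟶ FreeST.of G r) ≫ projPath G r i

/-- Interpretation of a tree in a strict algebra. -/
noncomputable def evalT {n : ℕ+} : CTree G n → (A.obj (FreeST.of G n) ⟶ A.obj (FreeST.of G 1))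
  | .proj k => A.map (projPath G n k)
  | .node α i ts => tup (fun j => evalT (ts j)) ≫ fanInv A hA _ ≫ A.map (genHom α i)

/-- Interpretation of a morphism of the completion in a strict algebra. -/
noncomputable def extMap {a b : ℕ+} (T : CompHom G a b) :
    A.obj (FreeST.of G a) ⟶ A.obj (FreeST.of G b) :=
  tup (fun j => evalT A hA (T j)) ≫ fanInv A hA b

theorem extMap_proj {a b : ℕ+} (T : CompHom G a b) (k : Fin b) :
    extMap A hA T ≫ A.map (projPath G b k) = evalT A hA (T k) := by
  have h : A.map (projPath G b k) = fanF A b ≫ pick _ k := rfl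
  rw [extMap, h, Category.assoc, ← Category.assoc (fanInv A hA b), fanInv_fan,
    Category.id_comp, tup_pick]

theorem evalT_graft {a b : ℕ+} (s : CTree G b) (T : CompHom G a b) :
    evalT A hA (s.graft T) = extMap A hA T ≫ evalT A hA s := by
  induction s with
  | proj k => exact (extMap_proj A hA T k).symm
  | node α i ts ih =>
      show tup (fun j => evalT A hA ((ts j).graft T)) ≫ fanInv A hA _ ≫ A.map (genHom α i) = _
      rw [show (fun j => evalT A hA ((ts j).graft T))
            = fun j => extMap A hA T ≫ evalT A hA (ts j) from funext ih]
      rw [← comp_tup]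
      show _ = extMap A hA T ≫ tup (fun j => evalT A hA (ts j)) ≫ fanInv A hA _ ≫ A.map (genHom α i)
      rw [Category.assoc]

/-- The extension of a strict algebra over `C` to the completion `C̄`. -/
noncomputable def extFun : CompOb G ⥤ SSet where
  obj n := A.obj (FreeST.of G (Ob.val n))
  map {a b} T := extMap A hA T
  map_id n := by
    show extMap A hA (compId G (Ob.val n)) = 𝟙 _
    rw [extMap]
    have h : tup (fun j => evalT A hA (compId G (Ob.val n) j)) = fanF A (Ob.val n) := rfl
    rw [h, fan_fanInv]
  map_comp {a b c} T S := by
    show extMap A hA (compComp T S) = _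
    rw [extMap]
    rw [show (fun j => evalT A hA (compComp T S j))
          = fun j => extMap A hA T ≫ evalT A hA (S j) from funext fun j => evalT_graft A hA (S j) T]
    rw [← comp_tup, Category.assoc]
    rfl

theorem fanInv_one (j0 : Fin ((1 : ℕ+) : ℕ)) : fanInv A hA 1 = pick _ j0 := by
  haveI := hA 1
  show inv (fanF A 1) = pick _ j0
  apply IsIso.inv_eq_of_hom_inv_id
  have h : fanF A 1 ≫ pick _ j0 = A.map (projPath G 1 j0) := rfl
  rw [h, projPath_one, A.map_id]

theorem extMap_one {a : ℕ+} (T : CompHom G a 1) (j0 : Fin ((1 : ℕ+) : ℕ)) :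
    extMap A hA T = evalT A hA (T j0) := by
  rw [extMap, fanInv_one A hA j0, tup_pick]

theorem extFun_fan_eq (n : ℕ+) : fanC (extFun A hA) n = fanF A n := by
  apply tup_ext
  intro k
  show extMap A hA (compProj G n k) = A.map (projPath G n k)
  exact extMap_one A hA (compProj G n k) ⟨0, Nat.one_pos⟩

theorem extFun_strict : IsStrictAt (CompOb.of G) (compProj G) (extFun A hA) := by
  intro n hn
  show IsIso (fanC (extFun A hA) n)
  rw [extFun_fan_eq]
  exact hA n

theorem fan_nat (φ : A ⟶ B) (n : ℕ+) :
    φ.app (FreeST.of G n) ≫ fanF B n = fanF A n ≫ powMap (φ.app (FreeST.of G 1)) := by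
  apply NatTrans.ext
  funext x; apply ConcreteCategory.hom_ext; intro a
  funext k
  exact (natApply φ (projPath G n k) x a).symm

theorem fanInv_nat (φ : A ⟶ B) (n : ℕ+) :
    fanInv A hA n ≫ φ.app (FreeST.of G n) =
      powMap (φ.app (FreeST.of G 1)) ≫ fanInv B hB n := by
  haveI := hA n
  haveI := hB n
  rw [← cancel_mono (fanF B n)]
  rw [Category.assoc, Category.assoc, fan_nat A B φ n, ← Category.assoc (fanInv A hA n),
    fanInv_fan, Category.id_comp, fanInv_fan, Category.comp_id]

theorem evalT_nat (φ : A ⟶ B) {n : ℕ+} (t : CTree G n) :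
    φ.app (FreeST.of G n) ≫ evalT B hB t = evalT A hA t ≫ φ.app (FreeST.of G 1) := by
  induction t with
  | proj k => exact (φ.naturality (projPath G n k)).symm
  | node α i ts ih =>
      show φ.app _ ≫ tup (fun j => evalT B hB (ts j)) ≫ fanInv B hB _ ≫ B.map (genHom α i)
          = (tup (fun j => evalT A hA (ts j)) ≫ fanInv A hA _ ≫ A.map (genHom α i)) ≫ φ.app _
      rw [← Category.assoc, comp_tup]
      rw [show (fun k => φ.app (FreeST.of G n) ≫ evalT B hB (ts k))
            = fun k => evalT A hA (ts k) ≫ φ.app (FreeST.of G 1) from funext ih]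
      rw [← tup_powMap, Category.assoc, ← Category.assoc (powMap _), ← fanInv_nat A B hA hB]
      rw [Category.assoc, ← φ.naturality (genHom α i)]
      simp only [Category.assoc]

/-- The extension of a morphism of strict algebras to the completions. -/
noncomputable def extNat (φ : A ⟶ B) : extFun A hA ⟶ extFun B hB where
  app n := φ.app (FreeST.of G (Ob.val n))
  naturality a b T := by
    show extMap A hA T ≫ φ.app _ = φ.app _ ≫ extMap B hB T
    rw [extMap, extMap, Category.assoc, fanInv_nat A B hA hB, ← Category.assoc, tup_powMap]
    rw [show (fun k => evalT A hA (T k) ≫ φ.app (FreeST.of G 1))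
          = fun k => φ.app (FreeST.of G (Ob.val a)) ≫ evalT B hB (T k) from
        funext fun k => (evalT_nat A B hA hB φ (T k)).symm]
    rw [← comp_tup, Category.assoc]

end Ext

section Phi

variable {G : GenData}

theorem phi_map_projPath (n : ℕ+) (k : Fin n) :
    (phi G).map (projPath G n k) = compProj G n k := by
  by_cases h : 1 < (n : ℕ)
  · simp only [projPath]
    rw [dif_pos h]
    show (Paths.lift _).map (Quiver.Hom.toPath (projArr G h k)) = _
    exact Paths.lift_toPath _ _
  · have hn : n = 1 := PNat.coe_injective (by rw [PNat.one_coe]; exact le_antisymm (not_lt.mp h) n.pos)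
    subst hn
    rw [projPath_one, compProj_one]
    exact (phi G).map_id _

theorem rest_fan_eq (A : CompOb G ⥤ SSet) (n : ℕ+) :
    fanF (phi G ⋙ A) n = fanC A n := by
  apply tup_ext
  intro k
  show A.map ((phi G).map (projPath G n k)) = A.map (compProj G n k)
  rw [phi_map_projPath]
  rfl

theorem rest_strict (A : CompOb G ⥤ SSet)
    (hA : IsStrictAt (CompOb.of G) (compProj G) A) :
    IsStrictAt (FreeST.of G) (projPath G) (phi G ⋙ A) := by
  intro n hn
  show IsIso (fanF (phi G ⋙ A) n)
  rw [rest_fan_eq]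
  exact hA n hn

section RoundTrip1

variable (A : FreeST G ⥤ SSet) (hA : ∀ n, IsIso (fanF A n))

theorem extMap_phiArr {a b : ℕ+} (e : Arr G a b) :
    extMap A hA (phiArr G e) = A.map (Quiver.Hom.toPath (arrHom e)) := by
  cases e with
  | proj h k =>
      rw [extMap_one A hA _ ⟨0, Nat.one_pos⟩]
      show A.map (projPath G _ k) = _
      congr 1
      simp only [projPath]
      rw [dif_pos h]
      rfl
  | gen α =>
      show tup (fun i => evalT A hA (CTree.node α i fun k => CTree.proj k)) ≫ fanInv A hA _ = _
      have h1 : ∀ i, evalT A hA (CTree.node α i (fun k => CTree.proj k))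
          = A.map (Quiver.Hom.toPath (genArrow α)) ≫ A.map (projPath G _ i) := by
        intro i
        show tup (fun k => evalT A hA (CTree.proj k)) ≫ fanInv A hA _ ≫ A.map (genHom α i) = _
        have h2 : tup (fun k => evalT A hA (CTree.proj (n := a) k)) = fanF A a := rfl
        rw [h2, ← Category.assoc, fan_fanInv, Category.id_comp, genHom, A.map_comp]
      rw [show (fun i => evalT A hA (CTree.node α i fun k => CTree.proj k))
            = fun i => A.map (Quiver.Hom.toPath (genArrow α)) ≫ A.map (projPath G _ i) from
          funext h1]
      rw [← comp_tup]
      have h3 : tup (fun i => A.map (projPath G b i)) = fanF A b := rfl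
      rw [h3, Category.assoc, fan_fanInv, Category.comp_id]
      rfl

theorem extFun_phi_map {X Y : FreeST G} (f : X ⟶ Y) :
    (extFun A hA).map ((phi G).map f) = A.map f := by
  refine Paths.induction
    (P := fun {a b} f => (extFun A hA).map ((phi G).map f) = A.map f) ?_ ?_ f
  · intro v
    rw [CategoryTheory.Functor.map_id, CategoryTheory.Functor.map_id,
      CategoryTheory.Functor.map_id]
    rfl
  · intro u v w p q ih
    rw [CategoryTheory.Functor.map_comp, CategoryTheory.Functor.map_comp,
      CategoryTheory.Functor.map_comp, ih]
    congr 1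
    show (extFun A hA).map ((phi G).map (Quiver.Hom.toPath q)) = A.map (Quiver.Hom.toPath q)
    have hq : (phi G).map (Quiver.Hom.toPath q) = phiArr G q := Paths.lift_toPath _ q
    rw [hq]
    exact extMap_phiArr A hA q

theorem phi_comp_extFun : phi G ⋙ extFun A hA = A := by
  refine CategoryTheory.Functor.ext (fun X => rfl) (fun X Y f => ?_)
  show _ = 𝟙 _ ≫ _ ≫ 𝟙 _
  simp only [eqToHom_refl, Category.comp_id, Category.id_comp]
  exact extFun_phi_map A hA f

end RoundTrip1

section RoundTrip2

variable (A : CompOb G ⥤ SSet)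

/-- The strictness of a restricted algebra, in all-`n` form. -/
theorem restIso (hA : ∀ n, IsIso (fanC A n)) : ∀ n, IsIso (fanF (phi G ⋙ A) n) := fun n => by
  rw [rest_fan_eq]
  exact hA n

theorem fanInv_rest (hA : ∀ n, IsIso (fanC A n)) (n : ℕ+) :
    fanInv (phi G ⋙ A) (restIso A hA) n = (haveI := hA n; inv (fanC A n)) := by
  haveI := restIso A hA n
  haveI := hA n
  show inv (fanF (phi G ⋙ A) n) = _
  apply IsIso.inv_eq_of_hom_inv_id
  erw [rest_fan_eq]
  exact @IsIso.hom_inv_id _ _ _ _ (fanC A n) (hA n)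

/-- A tree as a morphism `[n] ⟶ [1]` of the completion. -/
def treeHom {n : ℕ+} (t : CTree G n) : CompOb.of G n ⟶ CompOb.of G 1 := fun _ => t

theorem tup_treeHom {a b : ℕ+} (T : CompHom G a b) :
    tup (fun j => A.map (treeHom (T j))) = A.map T ≫ fanC A b := by
  apply tup_ext
  intro k
  rw [tup_pick]
  show A.map (treeHom (T k)) = A.map T ≫ A.map (compProj G b k)
  exact A.map_comp T (compProj G b k)

theorem evalT_rest (hA : ∀ n, IsIso (fanC A n)) {n : ℕ+} (t : CTree G n) :
    evalT (phi G ⋙ A) (restIso A hA) t = A.map (treeHom t) := by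
  induction t with
  | proj k =>
      show A.map ((phi G).map (projPath G n k)) = _
      rw [phi_map_projPath]
      rfl
  | @node m r α i ts ih =>
      show tup (fun j => evalT (phi G ⋙ A) (restIso A hA) (ts j)) ≫
          fanInv (phi G ⋙ A) (restIso A hA) _ ≫ (phi G ⋙ A).map (genHom α i) = _
      rw [show (fun j => evalT (phi G ⋙ A) (restIso A hA) (ts j))
            = fun j => A.map (treeHom (ts j)) from funext ih]
      erw [tup_treeHom, fanInv_rest A hA]
      have hg : (phi G ⋙ A).map (genHom α i)
          = A.map (treeHom (CTree.node α i fun k => CTree.proj k)) := by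
        show A.map ((phi G).map ((Quiver.Hom.toPath (genArrow α) :
            FreeST.of G _ ⟶ FreeST.of G _) ≫ projPath G _ i)) = _
        rw [(phi G).map_comp, phi_map_projPath]
        have ht : (phi G).map (Quiver.Hom.toPath (genArrow α)) = phiArr G (genArrow α) :=
          Paths.lift_toPath _ (genArrow α)
        rw [ht]
        rfl
      erw [hg, Category.assoc]
      haveI := hA m
      erw [IsIso.hom_inv_id_assoc, ← A.map_comp]
      rfl

theorem extMap_rest (hA : ∀ n, IsIso (fanC A n)) {a b : ℕ+} (T : CompHom G a b) :
    extMap (phi G ⋙ A) (restIso A hA) T = A.map T := by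
  rw [extMap]
  rw [show (fun j => evalT (phi G ⋙ A) (restIso A hA) (T j))
        = fun j => A.map (treeHom (T j)) from funext fun j => evalT_rest A hA (T j)]
  erw [tup_treeHom, fanInv_rest A hA, Category.assoc]
  haveI := hA b
  erw [IsIso.hom_inv_id, Category.comp_id]

theorem extFun_rest (hA : ∀ n, IsIso (fanC A n)) : extFun (phi G ⋙ A) (restIso A hA) = A := by
  refine CategoryTheory.Functor.ext (fun n => rfl) (fun a b T => ?_)
  show _ = 𝟙 _ ≫ _ ≫ 𝟙 _
  simp only [eqToHom_refl, Category.comp_id, Category.id_comp]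
  exact extMap_rest A hA T

end RoundTrip2

end Phi

section Assemble

variable {G : GenData}

/-- All projection fans of a strict `C`-algebra are isomorphisms (including `n = 1`). -/
theorem allIsoF (A : AlgFree G) : ∀ n, IsIso (fanF A.obj n) :=
  strictAll _ _ _ (fun k => projPath_one k) A.property

/-- All projection fans of a strict `C̄`-algebra are isomorphisms (including `n = 1`). -/
theorem allIsoC (A : AlgComp G) : ∀ n, IsIso (fanC A.obj n) :=
  strictAll _ _ _ (fun k => compProj_one k) A.property

/-- Restriction along the completion functor. -/
noncomputable def Fres : AlgComp G ⥤ AlgFree G where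
  obj A := ⟨phi G ⋙ A.obj, rest_strict A.obj A.property⟩
  map {A B} φ := ObjectProperty.homMk (CategoryTheory.Functor.whiskerLeft (phi G) φ.hom)
  map_id A := rfl
  map_comp φ ψ := rfl

/-- Extension along the completion functor. -/
noncomputable def Fext : AlgFree G ⥤ AlgComp G where
  obj A := ⟨extFun A.obj (allIsoF A), extFun_strict A.obj (allIsoF A)⟩
  map {A B} φ := ObjectProperty.homMk (extNat A.obj B.obj (allIsoF A) (allIsoF B) φ.hom)
  map_id A := rfl
  map_comp φ ψ := rfl

theorem fs_conj {C : Type} [Category.{0} C] {P : (C ⥤ SSet) → Prop}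
    {X X' Y Y' : ObjectProperty.FullSubcategory P} (h1 : X' = X) (h2 : Y = Y')
    (f : X ⟶ Y) (n : C) :
    NatTrans.app (eqToHom h1 ≫ f ≫ eqToHom h2 : X' ⟶ Y').hom n =
      eqToHom (congrArg (fun Z : ObjectProperty.FullSubcategory P => Z.obj.obj n) h1) ≫
        NatTrans.app f.hom n ≫
          eqToHom (congrArg (fun Z : ObjectProperty.FullSubcategory P => Z.obj.obj n) h2) := by
  subst h1
  subst h2
  simp

theorem FresFext : Fres (G := G) ⋙ Fext = 𝟭 (AlgComp G) := by
  refine CategoryTheory.Functor.ext (fun A => ?_) (fun A B φ => ?_)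
  · apply ObjectProperty.FullSubcategory.ext
    show extFun (phi G ⋙ A.obj) (allIsoF ((Fres (G := G)).obj A)) = A.obj
    exact extFun_rest A.obj (allIsoC A)
  · apply ObjectProperty.hom_ext; apply NatTrans.ext
    funext n
    rw [fs_conj]
    rfl

theorem FextFres : Fext (G := G) ⋙ Fres = 𝟭 (AlgFree G) := by
  refine CategoryTheory.Functor.ext (fun A => ?_) (fun A B φ => ?_)
  · apply ObjectProperty.FullSubcategory.ext
    show phi G ⋙ extFun A.obj (allIsoF A) = A.obj
    exact phi_comp_extFun A.obj (allIsoF A)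
  · apply ObjectProperty.hom_ext; apply NatTrans.ext
    funext n
    rw [fs_conj]
    rfl

end Assemble
/-! ### STATEMENT 1
Restriction along the completion functor `Φ_C : C ⟶ C̄` induces an isomorphism of
categories between strict `C̄`-algebras and strict `C`-algebras. -/
theorem restriction_along_phi_is_isomorphism (G : GenData) :
    ∃ (F : AlgComp G ⥤ AlgFree G) (F' : AlgFree G ⥤ AlgComp G)
      (hobj : ∀ A : AlgComp G, (F.obj A).obj = phi G ⋙ A.obj),
      (∀ (A B : AlgComp G) (φ : A ⟶ B),
        (F.map φ).hom =
          eqToHom (hobj A) ≫ CategoryTheory.Functor.whiskerLeft (phi G) φ.hom ≫ eqToHom (hobj B).symm) ∧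
      F ⋙ F' = 𝟭 (AlgComp G) ∧ F' ⋙ F = 𝟭 (AlgFree G) := by
  refine ⟨Fres, Fext, fun A => rfl, fun A B φ => ?_, FresFext, FextFres⟩
  show _ = 𝟙 _ ≫ _ ≫ 𝟙 _
  simp only [eqToHom_refl, Category.comp_id, Category.id_comp]
  rfl

end SemiThPaper
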